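/- Let C, P, Q, a, b be as in the context. For all objects X and Y of C, every morphism X ⊗ P → Y ⊗ Q is zero; that is, Hom_C(X ⊗ P, Y ⊗ Q) = 0. (This is the orthogonality between the P-part and the Q-part of the decomposition induced by microlocal kernels.) -/

import Mathlib

/-!
Orthogonality between the `P`-part and the `Q`-part of the decomposition induced by
microlocal kernels: with `P ⟶ 𝟙 ⟶ Q ⟶ P⟦1⟧` distinguished, `P ⊗ Q ≅ 0`, `Q ⊗ P ≅ 0`,
every morphism `X ⊗ P ⟶ Y ⊗ Q` is zero.
-/

open CategoryTheory Category Limits Pretriangulated MonoidalCategory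

theorem microlocal_kernel_orthogonality
    {C : Type*} [Category C] [MonoidalCategory C]
    [Preadditive C] [HasZeroObject C] [HasShift C ℤ]
    [∀ n : ℤ, (shiftFunctor C n).Additive] [Pretriangulated C]
    [∀ X : C, (tensorLeft X).CommShift ℤ] [∀ X : C, (tensorRight X).CommShift ℤ]
    [∀ X : C, (tensorLeft X).IsTriangulated] [∀ X : C, (tensorRight X).IsTriangulated]
    (P Q : C) (a : P ⟶ 𝟙_ C) (b : 𝟙_ C ⟶ Q) (δ : Q ⟶ P⟦(1 : ℤ)⟧)
    (hT : Triangle.mk a b δ ∈ distTriang C)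
    (hPQ : IsZero (P ⊗ Q)) (hQP : IsZero (Q ⊗ P)) :
    ∀ (X Y : C) (f : X ⊗ P ⟶ Y ⊗ Q), f = 0 := by
  intro X Y f
  -- `(X ⊗ P) ⊗ Q` is zero
  have hXPQ : IsZero ((X ⊗ P) ⊗ Q) :=
    ((tensorLeft X).map_isZero hPQ).of_iso (α_ X P Q)
  -- `(Y ⊗ Q) ⊗ P` is zero
  have hYQP : IsZero ((Y ⊗ Q) ⊗ P) :=
    ((tensorLeft Y).map_isZero hQP).of_iso (α_ Y Q P)
  -- tensoring the triangle by `X ⊗ P` shows `(X ⊗ P) ◁ a` is an isomorphism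
  have hT' := (tensorLeft (X ⊗ P)).map_distinguished _ hT
  have hIso : IsIso ((X ⊗ P) ◁ a) := by
    have := (Triangle.isZero₃_iff_isIso₁ _ hT').1 hXPQ
    exact this
  -- `f ▷ P = 0` since its target is zero
  have hfP : f ▷ P = 0 := hYQP.eq_of_tgt _ _
  have hex : (X ⊗ P) ◁ a ≫ f ▷ (𝟙_ C) = f ▷ P ≫ (Y ⊗ Q) ◁ a :=
    whisker_exchange f a
  rw [hfP, zero_comp] at hex
  have hf1 : f ▷ (𝟙_ C) = 0 := by
    rw [← cancel_epi ((X ⊗ P) ◁ a), hex, comp_zero]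
  have := hf1
  rw [MonoidalCategory.whiskerRight_id] at this
  simpa using this
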